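/- Let {X_n} satisfy AIM(x_n) with separation sequence q_n and mixing coefficients α_n, suppose n·F̄(x_n) → τ > 0 as n → ∞, and let (p_n) be positive integers with p_n = o(n), n·α_n = o(p_n) and q_n = o(p_n). Then limsup_{n→∞} [ P(M_n ≤ x_n) − exp{−∑_{j=1}^{n} P(X_j > x_n, M_{j,j+p_n} ≤ x_n)} ] ≤ 0, i.e. P(M_n ≤ x_n) ≤ exp{−∑_{j=1}^{n} P(X_j > x_n, M_{j,j+p_n} ≤ x_n)} + o(1). -/

import Mathlib

open MeasureTheory Filter Finset Asymptotics

/-- Probability of an event as a real number. -/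
noncomputable def pr {Ω : Type*} [MeasurableSpace Ω] (P : Measure Ω) (A : Set Ω) : ℝ :=
  (P A).toReal

/-- The event that `X i ≤ x` for every index `i` in the set `S`;
this is the event `{M(S) ≤ x}` where `M(S) = max {X i : i ∈ S}`. -/
def allLe {Ω : Type*} (X : ℕ → Ω → ℝ) (S : Set ℕ) (x : ℝ) : Set Ω :=
  {ω | ∀ i ∈ S, X i ω ≤ x}

/-- `α` is a sequence of AIM mixing coefficients for `X` relative to thresholds `xs`
with separation sequence `q`: for any two intervals `I₁ = [a,b]`, `I₂ = [b+qₙ+1, c]`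
contained in `{1,…,n}`, separated by `qₙ`, each of cardinality at least `qₙ`,
the maximum-based discrepancy is bounded by `α n`. -/
def AIMBound {Ω : Type*} [MeasurableSpace Ω] (P : Measure Ω) (X : ℕ → Ω → ℝ)
    (xs : ℕ → ℝ) (q : ℕ → ℕ) (α : ℕ → ℝ) : Prop :=
  ∀ n a b c : ℕ, 1 ≤ a → a ≤ b → b + q n + 1 ≤ c → c ≤ n →
    q n ≤ b + 1 - a → q n ≤ c - (b + q n) →
    |pr P (allLe X (Set.Icc a b ∪ Set.Icc (b + q n + 1) c) (xs n)) -
      pr P (allLe X (Set.Icc a b) (xs n)) *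
        pr P (allLe X (Set.Icc (b + q n + 1) c) (xs n))| ≤ α n

section helpers
variable {Ω : Type*} [MeasurableSpace Ω] {P : Measure Ω} [IsProbabilityMeasure P]
  {X : ℕ → Ω → ℝ} {x : ℝ}

lemma pr_nonneg {A : Set Ω} : 0 ≤ pr P A := ENNReal.toReal_nonneg

lemma pr_le_one {A : Set Ω} : pr P A ≤ 1 := by
  rw [pr, ← ENNReal.toReal_one]
  exact ENNReal.toReal_mono (by simp) prob_le_one

lemma pr_mono {A B : Set Ω} (h : A ⊆ B) : pr P A ≤ pr P B :=
  ENNReal.toReal_mono (measure_ne_top _ _) (measure_mono h)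

lemma pr_univ : pr P (Set.univ : Set Ω) = 1 := by simp [pr]

lemma allLe_measurable (hmeas : ∀ i, Measurable (X i)) (S : Set ℕ) :
    MeasurableSet (allLe X S x) := by
  have : allLe X S x = ⋂ i ∈ S, {ω | X i ω ≤ x} := by
    ext ω; simp [allLe]
  rw [this]
  exact MeasurableSet.biInter S.to_countable
    (fun i _ => measurableSet_le (hmeas i) measurable_const)

lemma allLe_anti {S T : Set ℕ} (h : S ⊆ T) : allLe X T x ⊆ allLe X S x :=
  fun ω hω i hi => hω i (h hi)

lemma allLe_empty : allLe X (∅ : Set ℕ) x = Set.univ := by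
  ext ω; simp [allLe]

lemma allLe_insert (j : ℕ) (S : Set ℕ) :
    allLe X (insert j S) x = {ω | X j ω ≤ x} ∩ allLe X S x := by
  ext ω; simp [allLe]

/-- key splitting identity -/
lemma pr_split (hmeas : ∀ i, Measurable (X i)) {j b : ℕ} (hjb : j ≤ b) :
    pr P (allLe X (Set.Icc (j+1) b) x) =
      pr P (allLe X (Set.Icc j b) x) +
        pr P ({ω | x < X j ω} ∩ allLe X (Set.Icc (j+1) b) x) := by
  have hIcc : Set.Icc j b = insert j (Set.Icc (j+1) b) := by
    ext i; simp [Set.mem_Icc, Set.mem_insert_iff]; omega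
  set A := allLe X (Set.Icc (j+1) b) x with hA
  have hsplit : A = (allLe X (Set.Icc j b) x) ∪ ({ω | x < X j ω} ∩ A) := by
    rw [hIcc, allLe_insert]
    ext ω
    constructor
    · intro hω
      rcases le_or_gt (X j ω) x with h | h
      · exact Or.inl ⟨h, hω⟩
      · exact Or.inr ⟨h, hω⟩
    · rintro (⟨_, h⟩ | ⟨_, h⟩) <;> exact h
  have hdisj : Disjoint (allLe X (Set.Icc j b) x) ({ω | x < X j ω} ∩ A) := by
    rw [hIcc, allLe_insert]
    refine Set.disjoint_left.2 fun ω hω h2 => ?_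
    simp only [Set.mem_inter_iff, Set.mem_setOf_eq] at hω h2
    linarith [hω.1, h2.1]
  have hm1 : MeasurableSet (allLe X (Set.Icc j b) x) := allLe_measurable hmeas _
  have hm2 : MeasurableSet ({ω | x < X j ω} ∩ A) :=
    (measurableSet_lt measurable_const (hmeas j)).inter (allLe_measurable hmeas _)
  have hmu := measure_union (μ := P) hdisj hm2
  have hPA : P A = P (allLe X (Set.Icc j b) x) + P ({ω | x < X j ω} ∩ A) := by
    rw [← hmu, ← hsplit]
  simp only [pr]
  rw [hPA, ENNReal.toReal_add (measure_ne_top _ _) (measure_ne_top _ _)]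


/-- Block bound: for an interval of length ≤ pp+1,
`P(M ≤ x) ≤ 1 - ∑ s_j`. -/
lemma block_bound (hmeas : ∀ i, Measurable (X i)) (pp : ℕ) :
    ∀ m a b : ℕ, b + 1 = a + m → b ≤ a + pp →
    pr P (allLe X (Set.Icc a b) x) ≤
      1 - ∑ j ∈ Finset.Icc a b,
        pr P ({ω | x < X j ω} ∩ allLe X (Set.Icc (j+1) (j+pp)) x) := by
  intro m
  induction m with
  | zero =>
    intro a b h1 _
    have hab : b < a := by omega
    have : Set.Icc a b = (∅ : Set ℕ) := by
      ext i; simp [Set.mem_Icc]; omega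
    rw [this, allLe_empty, pr_univ, Finset.Icc_eq_empty (by omega)]
    simp
  | succ m ih =>
    intro a b h1 h2
    have hab : a ≤ b := by omega
    have hsplit := pr_split (P := P) (X := X) (x := x) hmeas (j := a) (b := b) hab
    have hmono : pr P ({ω | x < X a ω} ∩ allLe X (Set.Icc (a+1) (a+pp)) x) ≤
        pr P ({ω | x < X a ω} ∩ allLe X (Set.Icc (a+1) b) x) := by
      apply pr_mono
      apply Set.inter_subset_inter_right
      apply allLe_anti
      intro i hi
      simp only [Set.mem_Icc] at *
      omega
    have hIH := ih (a+1) b (by omega) (by omega)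
    have hsum : ∑ j ∈ Finset.Icc a b,
        pr P ({ω | x < X j ω} ∩ allLe X (Set.Icc (j+1) (j+pp)) x) =
        pr P ({ω | x < X a ω} ∩ allLe X (Set.Icc (a+1) (a+pp)) x) +
        ∑ j ∈ Finset.Icc (a+1) b,
          pr P ({ω | x < X j ω} ∩ allLe X (Set.Icc (j+1) (j+pp)) x) := by
      have hins : Finset.Icc a b = insert a (Finset.Icc (a+1) b) := by
        ext i; simp only [Finset.mem_Icc, Finset.mem_insert]; omega
      rw [hins, Finset.sum_insert (by simp [Finset.mem_Icc])]
    rw [hsum]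
    linarith

/-- Peeling lemma: repeated application of the mixing bound. -/
lemma peel (hmeas : ∀ i, Measurable (X i)) (pp qq n : ℕ) (αn : ℝ)
    (hbd : ∀ a b c : ℕ, 1 ≤ a → a ≤ b → b + qq + 1 ≤ c → c ≤ n →
      qq ≤ b + 1 - a → qq ≤ c - (b + qq) →
      |pr P (allLe X (Set.Icc a b ∪ Set.Icc (b + qq + 1) c) x) -
        pr P (allLe X (Set.Icc a b) x) *
          pr P (allLe X (Set.Icc (b + qq + 1) c) x)| ≤ αn)
    (hpp : 1 ≤ pp) (hqq : 1 ≤ qq) (hqple : qq ≤ pp) (k : ℕ)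
    (hk : k * (pp + qq) + (pp + qq) ≤ n) (hα0 : 0 ≤ αn) :
    ∀ d : ℕ, d ≤ k →
      pr P (allLe X (Set.Icc ((k - d) * (pp + qq) + 1) n) x) ≤
        Real.exp (-(∑ m ∈ Finset.Ico (k - d) k,
          ∑ j ∈ Finset.Icc (m * (pp + qq) + 1) (m * (pp + qq) + pp),
            pr P ({ω | x < X j ω} ∩ allLe X (Set.Icc (j+1) (j+pp)) x))) + d * αn := by
  set L := pp + qq with hL
  set s : ℕ → ℝ := fun j =>
    pr P ({ω | x < X j ω} ∩ allLe X (Set.Icc (j+1) (j+pp)) x) with hsdef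
  have hs0 : ∀ j, 0 ≤ s j := fun j => pr_nonneg
  intro d
  induction d with
  | zero =>
    intro _
    simp only [Nat.sub_zero, Finset.Ico_self, Finset.sum_empty, neg_zero,
      Real.exp_zero, Nat.cast_zero, zero_mul, add_zero]
    exact pr_le_one
  | succ d ihd =>
    intro hdk
    have ih := ihd (by omega)
    set i := k - (d + 1) with hi
    have hi1 : k - d = i + 1 := by omega
    have hik : i < k := by omega
    -- the three interval endpoints
    have hiL : i * L + L ≤ k * L := by
      have : i + 1 ≤ k := by omega
      calc i * L + L = (i + 1) * L := by ring
      _ ≤ k * L := Nat.mul_le_mul_right L this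
    have hbn : i * L + pp + qq + 1 ≤ n := by omega
    -- step 1: drop the gap
    have h1 : pr P (allLe X (Set.Icc (i * L + 1) n) x) ≤
        pr P (allLe X (Set.Icc (i * L + 1) (i * L + pp) ∪
          Set.Icc (i * L + pp + qq + 1) n) x) := by
      apply pr_mono; apply allLe_anti
      intro j hj
      simp only [Set.mem_union, Set.mem_Icc] at *
      omega
    -- step 2: mixing bound
    have h2 := hbd (i * L + 1) (i * L + pp) n (by omega) (by omega) hbn le_rfl
      (by omega) (by omega)
    have h2' : pr P (allLe X (Set.Icc (i * L + 1) (i * L + pp) ∪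
          Set.Icc (i * L + pp + qq + 1) n) x) ≤
        pr P (allLe X (Set.Icc (i * L + 1) (i * L + pp)) x) *
          pr P (allLe X (Set.Icc (i * L + pp + qq + 1) n) x) + αn := by
      have := abs_le.1 h2
      linarith [this.2]
    -- step 3: block bound for the first factor
    have h3 : pr P (allLe X (Set.Icc (i * L + 1) (i * L + pp)) x) ≤
        Real.exp (-(∑ j ∈ Finset.Icc (i * L + 1) (i * L + pp), s j)) := by
      have hb := block_bound (P := P) (X := X) (x := x) hmeas pp pp
        (i * L + 1) (i * L + pp) (by omega) (by omega)
      have hexp := Real.add_one_le_exp (-(∑ j ∈ Finset.Icc (i * L + 1) (i * L + pp), s j))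
      simp only [hsdef] at hb ⊢
      linarith
    -- step 4: IH for the second factor
    have h4 : pr P (allLe X (Set.Icc (i * L + pp + qq + 1) n) x) ≤
        Real.exp (-(∑ m ∈ Finset.Ico (i + 1) k,
          ∑ j ∈ Finset.Icc (m * L + 1) (m * L + pp), s j)) + d * αn := by
      have : i * L + pp + qq + 1 = (i + 1) * L + 1 := by ring
      rw [this]
      rw [hi1] at ih
      exact ih
    -- combine
    have hA0 : (0:ℝ) ≤ pr P (allLe X (Set.Icc (i * L + 1) (i * L + pp)) x) := pr_nonneg
    have hB0 : (0:ℝ) ≤ pr P (allLe X (Set.Icc (i * L + pp + qq + 1) n) x) := pr_nonneg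
    have hE1 : Real.exp (-(∑ j ∈ Finset.Icc (i * L + 1) (i * L + pp), s j)) ≤ 1 := by
      apply Real.exp_le_one_iff.2
      simp only [neg_nonpos]
      exact Finset.sum_nonneg fun j _ => hs0 j
    have hmul : pr P (allLe X (Set.Icc (i * L + 1) (i * L + pp)) x) *
          pr P (allLe X (Set.Icc (i * L + pp + qq + 1) n) x) ≤
        Real.exp (-(∑ j ∈ Finset.Icc (i * L + 1) (i * L + pp), s j)) *
          (Real.exp (-(∑ m ∈ Finset.Ico (i + 1) k,
            ∑ j ∈ Finset.Icc (m * L + 1) (m * L + pp), s j)) + d * αn) := by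
      apply mul_le_mul h3 h4 hB0 (Real.exp_nonneg _)
    have hsplitsum : ∑ m ∈ Finset.Ico i k,
        ∑ j ∈ Finset.Icc (m * L + 1) (m * L + pp), s j =
        (∑ j ∈ Finset.Icc (i * L + 1) (i * L + pp), s j) +
        ∑ m ∈ Finset.Ico (i + 1) k,
          ∑ j ∈ Finset.Icc (m * L + 1) (m * L + pp), s j := by
      exact Finset.sum_eq_sum_Ico_succ_bot hik _
    have hdnn : (0:ℝ) ≤ (d:ℝ) * αn := by positivity
    have key : pr P (allLe X (Set.Icc (i * L + 1) n) x) ≤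
        Real.exp (-(∑ m ∈ Finset.Ico i k,
          ∑ j ∈ Finset.Icc (m * L + 1) (m * L + pp), s j)) + (d + 1 : ℝ) * αn := by
      have e1 : Real.exp (-(∑ j ∈ Finset.Icc (i * L + 1) (i * L + pp), s j)) *
          Real.exp (-(∑ m ∈ Finset.Ico (i + 1) k,
            ∑ j ∈ Finset.Icc (m * L + 1) (m * L + pp), s j)) =
          Real.exp (-(∑ m ∈ Finset.Ico i k,
            ∑ j ∈ Finset.Icc (m * L + 1) (m * L + pp), s j)) := by
        rw [← Real.exp_add, hsplitsum, neg_add]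
      have e2 : Real.exp (-(∑ j ∈ Finset.Icc (i * L + 1) (i * L + pp), s j)) *
          ((d:ℝ) * αn) ≤ (d:ℝ) * αn := mul_le_of_le_one_left hdnn hE1
      nlinarith [h1, h2', hmul, e1, e2]
    have hgoal : pr P (allLe X (Set.Icc (i * L + 1) n) x) ≤
        Real.exp (-(∑ m ∈ Finset.Ico i k,
          ∑ j ∈ Finset.Icc (m * L + 1) (m * L + pp), s j)) + ((d+1 : ℕ) : ℝ) * αn := by
      push_cast
      exact key
    exact hgoal

lemma pr_compl_event (hmeas : ∀ i, Measurable (X i)) (j : ℕ) :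
    pr P {ω | x < X j ω} = 1 - pr P {ω | X j ω ≤ x} := by
  have hset : {ω : Ω | x < X j ω} = {ω : Ω | X j ω ≤ x}ᶜ := by
    ext ω; simp [not_le]
  have hm : MeasurableSet {ω : Ω | X j ω ≤ x} := measurableSet_le (hmeas j) measurable_const
  rw [hset, pr, measure_compl hm (measure_ne_top _ _), measure_univ,
    ENNReal.toReal_sub_of_le prob_le_one (by simp)]
  simp [pr]

end helpers

set_option maxHeartbeats 1000000 in
/-- under AIM(xₙ), `n·F̄(xₙ) → τ > 0`, and `pₙ = o(n)`,
`n·αₙ = o(pₙ)`, `qₙ = o(pₙ)`: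
`limsup_{n→∞} [P(Mₙ ≤ xₙ) − exp{−∑_{j=1}^n P(X_j > xₙ, M_{j,j+pₙ} ≤ xₙ)}] ≤ 0`. -/
theorem stmt16 {Ω : Type*} [MeasurableSpace Ω] (P : Measure Ω) [IsProbabilityMeasure P]
    (X : ℕ → Ω → ℝ) (F : ℝ → ℝ) (xs : ℕ → ℝ) (q : ℕ → ℕ) (α : ℕ → ℝ) (p : ℕ → ℕ)
    (τ : ℝ) (hτ : 0 < τ)
    (hmeas : ∀ i, Measurable (X i))
    (hF : ∀ i, 1 ≤ i → ∀ t : ℝ, pr P {ω | X i ω ≤ t} = F t)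
    (hqpos : ∀ m, 1 ≤ q m)
    (hq : (fun n : ℕ => (q n : ℝ)) =o[atTop] (fun n : ℕ => (n : ℝ)))
    (hα : Tendsto α atTop (nhds 0))
    (hbd : AIMBound P X xs q α)
    (hFbar : Tendsto (fun n : ℕ => (n : ℝ) * (1 - F (xs n))) atTop (nhds τ))
    (hppos : ∀ m, 1 ≤ p m)
    (hp : (fun n : ℕ => (p n : ℝ)) =o[atTop] (fun n : ℕ => (n : ℝ)))
    (hnα : (fun n : ℕ => (n : ℝ) * α n) =o[atTop] (fun n : ℕ => (p n : ℝ)))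
    (hqp : (fun n : ℕ => (q n : ℝ)) =o[atTop] (fun n : ℕ => (p n : ℝ))) :
    Filter.limsup (fun n : ℕ =>
      pr P (allLe X (Set.Icc 1 n) (xs n)) -
        Real.exp (-(∑ j ∈ Finset.Icc 1 n,
          pr P ({ω | xs n < X j ω} ∩ allLe X (Set.Icc (j + 1) (j + p n)) (xs n)))))
      atTop ≤ 0 := by
  set D := (fun n : ℕ =>
      pr P (allLe X (Set.Icc 1 n) (xs n)) -
        Real.exp (-(∑ j ∈ Finset.Icc 1 n,
          pr P ({ω | xs n < X j ω} ∩ allLe X (Set.Icc (j + 1) (j + p n)) (xs n)))))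
    with hD
  set Fb : ℕ → ℝ := fun n => 1 - F (xs n) with hFb
  set e1 : ℕ → ℝ := fun n => ((q n : ℝ) / ((p n : ℝ) + (q n : ℝ))) * ((n : ℝ) * Fb n)
      + 2 * ((p n : ℝ) / (n : ℝ)) * ((n : ℝ) * Fb n) with he1
  set bnd : ℕ → ℝ := fun n => (Real.exp (e1 n) - 1) + ((n : ℝ) * α n) / (p n) with hbnd
  -- positivity of p
  have hppos' : ∀ n, (0:ℝ) < (p n : ℝ) := fun n => by exact_mod_cast hppos n
  -- `bnd → 0`
  have t1 : Tendsto (fun n : ℕ => ((n:ℝ) * α n) / (p n : ℝ)) atTop (nhds 0) :=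
    hnα.tendsto_div_nhds_zero
  have t2 : Tendsto (fun n : ℕ => (q n : ℝ) / (p n : ℝ)) atTop (nhds 0) :=
    hqp.tendsto_div_nhds_zero
  have t3 : Tendsto (fun n : ℕ => (q n : ℝ) / ((p n : ℝ) + (q n : ℝ))) atTop (nhds 0) := by
    apply squeeze_zero (fun n => by positivity) (fun n => ?_) t2
    apply div_le_div_of_nonneg_left (by positivity) (hppos' n)
    simp
  have t4 : Tendsto (fun n : ℕ => (p n : ℝ) / (n : ℝ)) atTop (nhds 0) :=
    hp.tendsto_div_nhds_zero
  have te1 : Tendsto e1 atTop (nhds 0) := by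
    have h1 := t3.mul hFbar
    have h2 := ((t4.const_mul 2).mul hFbar)
    rw [zero_mul] at h1
    rw [mul_zero, zero_mul] at h2
    simpa using h1.add h2
  have texp : Tendsto (fun n : ℕ => Real.exp (e1 n) - 1) atTop (nhds 0) := by
    have h := (Real.continuous_exp.tendsto 0).comp te1
    rw [Real.exp_zero] at h
    simpa using h.sub_const 1
  have hbnd0 : Tendsto bnd atTop (nhds 0) := by simpa using texp.add t1
  -- eventual facts
  have hev1 : ∀ᶠ n in atTop, q n ≤ p n := by
    filter_upwards [hqp.def (by norm_num : (0:ℝ) < 1/2)] with n hn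
    have : (q n : ℝ) ≤ (1/2) * (p n : ℝ) := by
      simpa [Real.norm_natCast] using hn
    have h2 : (q n : ℝ) ≤ (p n : ℝ) := by linarith [hppos' n]
    exact_mod_cast h2
  have hev2 : ∀ᶠ n in atTop, 3 * q n ≤ n := by
    filter_upwards [hq.def (by norm_num : (0:ℝ) < 1/3)] with n hn
    have : (q n : ℝ) ≤ (1/3) * (n : ℝ) := by
      simpa [Real.norm_natCast] using hn
    have h3 : (3 * q n : ℝ) ≤ (n : ℝ) := by push_cast; linarith
    exact_mod_cast h3
  have hev3 : ∀ᶠ n in atTop, 2 * (p n + q n) ≤ n := by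
    filter_upwards [hp.def (by norm_num : (0:ℝ) < 1/4),
      hq.def (by norm_num : (0:ℝ) < 1/4)] with n hn1 hn2
    have h1 : (p n : ℝ) ≤ (1/4) * (n : ℝ) := by simpa [Real.norm_natCast] using hn1
    have h2 : (q n : ℝ) ≤ (1/4) * (n : ℝ) := by simpa [Real.norm_natCast] using hn2
    have h3 : (2 * (p n + q n) : ℝ) ≤ (n : ℝ) := by push_cast; linarith
    exact_mod_cast h3
  have hev4 : ∀ᶠ n in atTop, 0 ≤ α n := by
    filter_upwards [hev2] with n h3q
    have hb := hbd n 1 (q n) (3 * q n) le_rfl (hqpos n)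
      (by have := hqpos n; omega) h3q (by omega) (by omega)
    exact le_trans (abs_nonneg _) hb
  -- main eventual bound : D n ≤ bnd n
  have hev : ∀ᶠ n in atTop, D n ≤ bnd n := by
    filter_upwards [hev1, hev2, hev3, hev4, eventually_ge_atTop 1]
      with n hqple h3q h2pq hα0 hn1
    simp only [hD, hbnd, he1, hFb]
    set pp := p n with hpp
    set qq := q n with hqq
    set x := xs n with hx
    set L := pp + qq with hLdef
    set k := n / L - 1 with hkdef
    have hpp1 : 1 ≤ pp := hppos n
    have hqq1 : 1 ≤ qq := hqpos n
    have hL1 : 1 ≤ L := by omega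
    have hdiv2 : 2 ≤ n / L := (Nat.le_div_iff_mul_le (by omega)).2 (by omega)
    have hk1 : k + 1 = n / L := by omega
    have hkLn : k * L + L ≤ n := by
      have h1 : (k + 1) * L ≤ n := by rw [hk1]; exact Nat.div_mul_le_self n L
      calc k * L + L = (k + 1) * L := by ring
        _ ≤ n := h1
    have hppL : pp ≤ L := by omega
    have hkppn : k * pp ≤ n := le_trans (Nat.mul_le_mul_left k hppL) (by omega)
    -- peeling
    have hpeel := peel (P := P) (X := X) (x := x) hmeas pp qq n (α n)
      (fun a b c h1 h2 h3 h4 h5 h6 => hbd n a b c h1 h2 h3 h4 h5 h6)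
      hpp1 hqq1 hqple k hkLn hα0 k le_rfl
    rw [Nat.sub_self] at hpeel
    simp only [zero_mul, zero_add] at hpeel
    -- union of blocks
    set U := (Finset.range k).biUnion (fun m => Finset.Icc (m * L + 1) (m * L + pp)) with hU
    have hblockdisj : ∀ m1 ∈ Finset.range k, ∀ m2 ∈ Finset.range k, m1 ≠ m2 →
        Disjoint (Finset.Icc (m1 * L + 1) (m1 * L + pp))
          (Finset.Icc (m2 * L + 1) (m2 * L + pp)) := by
      intro m1 _ m2 _ hne
      rw [Finset.disjoint_left]
      intro j hj1 hj2
      simp only [Finset.mem_Icc] at hj1 hj2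
      rcases lt_or_gt_of_ne hne with h | h
      · have h2 : m1 * L + L ≤ m2 * L := by
          calc m1 * L + L = (m1 + 1) * L := by ring
            _ ≤ m2 * L := Nat.mul_le_mul_right L h
        omega
      · have h2 : m2 * L + L ≤ m1 * L := by
          calc m2 * L + L = (m2 + 1) * L := by ring
            _ ≤ m1 * L := Nat.mul_le_mul_right L h
        omega
    have hWU : ∑ m ∈ Finset.Ico 0 k, ∑ j ∈ Finset.Icc (m * L + 1) (m * L + pp),
          pr P ({ω | x < X j ω} ∩ allLe X (Set.Icc (j + 1) (j + pp)) x)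
        = ∑ j ∈ U, pr P ({ω | x < X j ω} ∩ allLe X (Set.Icc (j + 1) (j + pp)) x) := by
      rw [hU, ← Finset.range_eq_Ico]
      exact (Finset.sum_biUnion
        (fun m1 h1 m2 h2 hne => hblockdisj m1 (by simpa using h1) m2 (by simpa using h2) hne)).symm
    rw [hWU] at hpeel
    have hUsub : U ⊆ Finset.Icc 1 n := by
      intro j hj
      simp only [hU, Finset.mem_biUnion, Finset.mem_range, Finset.mem_Icc] at hj
      obtain ⟨m, hm, hj1, hj2⟩ := hj
      have h2 : m * L + L ≤ k * L := by
        calc m * L + L = (m + 1) * L := by ring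
          _ ≤ k * L := Nat.mul_le_mul_right L hm
      simp only [Finset.mem_Icc]
      omega
    have hcardU : U.card = k * pp := by
      rw [hU, Finset.card_biUnion hblockdisj]
      have hc : ∀ m ∈ Finset.range k, (Finset.Icc (m * L + 1) (m * L + pp)).card = pp := by
        intro m _
        rw [Nat.card_Icc]
        omega
      rw [Finset.sum_congr rfl hc, Finset.sum_const, Finset.card_range, smul_eq_mul]
    -- F-bar facts
    have hFb0 : 0 ≤ 1 - F x := by
      have h3 := hF 1 le_rfl x
      have h2 : pr P {ω | X 1 ω ≤ x} ≤ 1 := pr_le_one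
      rw [h3] at h2
      linarith
    have hsF : ∀ j, 1 ≤ j →
        pr P ({ω | x < X j ω} ∩ allLe X (Set.Icc (j + 1) (j + pp)) x) ≤ 1 - F x := by
      intro j hj
      have h1 : pr P ({ω | x < X j ω} ∩ allLe X (Set.Icc (j + 1) (j + pp)) x) ≤
          pr P {ω | x < X j ω} := pr_mono Set.inter_subset_left
      rw [pr_compl_event (P := P) (X := X) (x := x) hmeas j, hF j hj x] at h1
      exact h1
    -- sums
    set S := ∑ j ∈ Finset.Icc 1 n,
      pr P ({ω | x < X j ω} ∩ allLe X (Set.Icc (j + 1) (j + pp)) x) with hS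
    set W := ∑ j ∈ U,
      pr P ({ω | x < X j ω} ∩ allLe X (Set.Icc (j + 1) (j + pp)) x) with hW
    have hs0 : ∀ j, (0:ℝ) ≤ pr P ({ω | x < X j ω} ∩ allLe X (Set.Icc (j + 1) (j + pp)) x) :=
      fun j => pr_nonneg
    have hS0 : 0 ≤ S := Finset.sum_nonneg fun j _ => hs0 j
    have hsdiffcard : (Finset.Icc 1 n \ U).card = n - k * pp := by
      rw [Finset.card_sdiff_of_subset hUsub, Nat.card_Icc, hcardU]
      omega
    have hsplit2 : S = (∑ j ∈ Finset.Icc 1 n \ U,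
          pr P ({ω | x < X j ω} ∩ allLe X (Set.Icc (j + 1) (j + pp)) x)) + W :=
      (Finset.sum_sdiff hUsub).symm
    have hsdiffle : ∑ j ∈ Finset.Icc 1 n \ U,
          pr P ({ω | x < X j ω} ∩ allLe X (Set.Icc (j + 1) (j + pp)) x)
        ≤ ((n - k * pp : ℕ) : ℝ) * (1 - F x) := by
      rw [← hsdiffcard]
      have h1 := Finset.sum_le_card_nsmul (Finset.Icc 1 n \ U)
        (fun j => pr P ({ω | x < X j ω} ∩ allLe X (Set.Icc (j + 1) (j + pp)) x)) (1 - F x)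
        (fun j hj => hsF j (by
          have := (Finset.mem_sdiff.1 hj).1
          exact (Finset.mem_Icc.1 this).1))
      simpa [nsmul_eq_mul] using h1
    have hcast : ((n - k * pp : ℕ) : ℝ) = (n : ℝ) - (k : ℝ) * (pp : ℝ) := by
      rw [Nat.cast_sub hkppn]
      push_cast
      ring
    set εr := ((n : ℝ) - (k : ℝ) * (pp : ℝ)) * (1 - F x) with hεr
    have hnkpp : (0:ℝ) ≤ (n : ℝ) - (k : ℝ) * (pp : ℝ) := by
      rw [← hcast]
      positivity
    have hεr0 : 0 ≤ εr := mul_nonneg hnkpp hFb0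
    have hWS : S ≤ W + εr := by
      rw [hεr, ← hcast]
      linarith [hsplit2, hsdiffle]
    -- numeric bounds on k
    have hkub : (k : ℝ) * (pp : ℝ) ≤ (n : ℝ) := by exact_mod_cast hkppn
    have hklbn : n < (k + 2) * L := by
      have h2 := Nat.div_add_mod n L
      have h3 : n % L < L := Nat.mod_lt _ (by omega)
      have h4 : L * (n / L) = L * (k + 1) := by rw [hk1]
      have h5 : (k + 2) * L = L * (k + 1) + L := by ring
      omega
    have hklb : (n : ℝ) < ((k : ℝ) + 2) * (L : ℝ) := by exact_mod_cast hklbn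
    have hLpos : (0:ℝ) < (L : ℝ) := by exact_mod_cast hL1
    have hnpos : (0:ℝ) < (n : ℝ) := by exact_mod_cast hn1
    have hpppos : (0:ℝ) < (pp : ℝ) := by exact_mod_cast hpp1
    have hLpq : (L : ℝ) = (pp : ℝ) + (qq : ℝ) := by rw [hLdef]; push_cast; ring
    -- (n - k pp) * L ≤ n qq + 2 pp L
    have hklb' : (n : ℝ) < ((k : ℝ) + 2) * ((pp : ℝ) + (qq : ℝ)) := by
      rw [← hLpq]; exact hklb
    have hpqpos : (0:ℝ) < (pp : ℝ) + (qq : ℝ) := by rw [← hLpq]; exact hLpos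
    have h7 : (0:ℝ) ≤ (pp : ℝ) * ((k : ℝ) * ((pp : ℝ) + qq) + 2 * ((pp : ℝ) + qq) - n) :=
      mul_nonneg (le_of_lt hpppos) (by nlinarith [hklb'])
    have hstep : ((n : ℝ) - (k : ℝ) * pp) * ((pp : ℝ) + qq) ≤
        (n : ℝ) * qq + 2 * pp * ((pp : ℝ) + qq) := by
      nlinarith [h7]
    set E := (qq : ℝ) / ((pp : ℝ) + (qq : ℝ)) * ((n : ℝ) * (1 - F x))
      + 2 * ((pp : ℝ) / (n : ℝ)) * ((n : ℝ) * (1 - F x)) with hE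
    have hEeq : E = (((n : ℝ) * qq + 2 * pp * ((pp : ℝ) + qq)) / ((pp : ℝ) + qq))
        * (1 - F x) := by
      rw [hE]
      field_simp
    have hεre1 : εr ≤ E := by
      rw [hEeq, hεr]
      apply mul_le_mul_of_nonneg_right _ hFb0
      rw [le_div_iff₀ hpqpos]
      exact hstep
    -- combine everything
    have h5 : Real.exp (-W) ≤ Real.exp (-S) * Real.exp εr := by
      rw [← Real.exp_add]
      apply Real.exp_le_exp.2
      linarith [hWS]
    have h6 : Real.exp (-S) ≤ 1 := Real.exp_le_one_iff.2 (by linarith)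
    have h7' : 1 ≤ Real.exp εr := by
      rw [← Real.exp_zero]
      exact Real.exp_le_exp.2 hεr0
    have h8 : Real.exp εr ≤ Real.exp E := Real.exp_le_exp.2 hεre1
    have h9 : (k : ℝ) * α n ≤ (n : ℝ) * α n / (pp : ℝ) := by
      have hk3 : (k : ℝ) ≤ (n : ℝ) / (pp : ℝ) := (le_div_iff₀ hpppos).2 hkub
      calc (k : ℝ) * α n ≤ ((n : ℝ) / (pp : ℝ)) * α n :=
            mul_le_mul_of_nonneg_right hk3 hα0
        _ = (n : ℝ) * α n / (pp : ℝ) := by ring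
    have hprod : 0 ≤ (1 - Real.exp (-S)) * (Real.exp εr - 1) :=
      mul_nonneg (by linarith) (by linarith)
    nlinarith [hpeel, h5, h6, h7', h8, h9, hprod, Real.exp_nonneg (-S)]
  -- conclude
  have hDlb : ∀ n, -1 ≤ D n := by
    intro n
    have h1 : 0 ≤ pr P (allLe X (Set.Icc 1 n) (xs n)) := pr_nonneg
    have h2 : Real.exp (-(∑ j ∈ Finset.Icc 1 n,
        pr P ({ω | xs n < X j ω} ∩ allLe X (Set.Icc (j + 1) (j + p n)) (xs n)))) ≤ 1 := by
      apply Real.exp_le_one_iff.2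
      simp only [neg_nonpos]
      exact Finset.sum_nonneg fun j _ => pr_nonneg
    simp only [hD]
    linarith
  refine le_of_forall_pos_le_add fun ε hε => ?_
  have hevε : ∀ᶠ n in atTop, D n ≤ 0 + ε := by
    have hb : ∀ᶠ n in atTop, bnd n < ε := hbnd0.eventually (gt_mem_nhds hε)
    filter_upwards [hev, hb] with n h1 h2
    linarith
  exact Filter.limsup_le_of_le (isCoboundedUnder_le_of_le atTop hDlb) hevε
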